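/- Let G be a finite group, N ≤ G a subgroup of index 2, and I a finite G-set of even cardinality r with r′ orbits, such that N acts transitively on each G-orbit of I. Let M be the G-lattice with ℤ-basis {e_i : i ∈ I} ∪ {f, g} and G-action given by: for σ ∈ N, σ·e_i = e_{σ·i}, σ·f = f, σ·g = g; for σ ∈ G∖N, σ·e_i = −e_{σ·i} + g, σ·f = f − Σ_{i∈I} e_i + (r/2)·g, σ·g = g. Then the first group cohomology H¹(G, M) is isomorphic as an abelian group to (ℤ/2ℤ)^{r′−1} if every G-orbit of I has even cardinality, and to (ℤ/2ℤ)^{r′−2} if some G-orbit of I has odd cardinality. -/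

import Mathlib

open MulAction groupCohomology Finset

set_option linter.unusedSectionVars false
set_option linter.unusedVariables false
set_option maxHeartbeats 1000000

namespace H1EvenAux

attribute [local instance] Classical.propDecidable

variable {G : Type} [Group G] [Fintype G] {N : Subgroup G}
variable {I : Type} [Fintype I] [MulAction G I]

noncomputable instance : Fintype (orbitRel.Quotient G I) := Fintype.ofFinite _

variable (G I) in
noncomputable def fib (O : orbitRel.Quotient G I) : Finset I :=
  univ.filter (fun i => (Quotient.mk'' i : orbitRel.Quotient G I) = O)

lemma sum_comp_qmk (F : orbitRel.Quotient G I → ℤ) :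
    ∑ i : I, F (Quotient.mk'' i) = ∑ O : orbitRel.Quotient G I, ((fib G I O).card : ℤ) * F O := by
  rw [← Finset.sum_fiberwise univ (fun i => (Quotient.mk'' i : orbitRel.Quotient G I))
    (fun i => F (Quotient.mk'' i))]
  refine Finset.sum_congr rfl fun O _ => ?_
  calc ∑ i ∈ univ.filter (fun i => (Quotient.mk'' i : orbitRel.Quotient G I) = O),
        F (Quotient.mk'' i)
      = ∑ i ∈ univ.filter (fun i => (Quotient.mk'' i : orbitRel.Quotient G I) = O), F O := by
        refine Finset.sum_congr rfl fun i hi => ?_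
        rw [(Finset.mem_filter.1 hi).2]
    _ = ((fib G I O).card : ℤ) * F O := by
        rw [Finset.sum_const, fib]; simp [mul_comm]

lemma mul_not_mem_left (hN : N.index = 2) {a b : G} (ha : a ∈ N) (hb : b ∉ N) : a * b ∉ N := by
  intro h
  exact hb (((Subgroup.mul_mem_iff_of_index_two hN).1 h).1 ha)

lemma mul_not_mem_right (hN : N.index = 2) {a b : G} (ha : a ∉ N) (hb : b ∈ N) : a * b ∉ N := by
  intro h
  exact ha (((Subgroup.mul_mem_iff_of_index_two hN).1 h).2 hb)

lemma mul_mem_of_not (hN : N.index = 2) {a b : G} (ha : a ∉ N) (hb : b ∉ N) : a * b ∈ N :=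
  (Subgroup.mul_mem_iff_of_index_two hN).2 (iff_of_false ha hb)

lemma exists_not_mem (hN : N.index = 2) : ∃ τ : G, τ ∉ N := by
  by_contra h
  push_neg at h
  have : N = ⊤ := Subgroup.eq_top_iff' N |>.2 h
  rw [this, Subgroup.index_top] at hN
  omega

lemma conj_mem (hN : N.index = 2) {n : G} (hn : n ∈ N) (τ : G) : τ * n * τ⁻¹ ∈ N := by
  by_cases hτ : τ ∈ N
  · exact N.mul_mem (N.mul_mem hτ hn) ((Subgroup.inv_mem_iff N).2 hτ)
  · exact mul_mem_of_not hN (mul_not_mem_right hN hτ hn) (fun h => hτ ((Subgroup.inv_mem_iff N).1 h))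

-- orbit quotient basics
lemma qmk_smul (σ : G) (y : I) :
    (Quotient.mk'' (σ • y) : orbitRel.Quotient G I) = Quotient.mk'' y :=
  Quotient.sound' ⟨σ, rfl⟩

/-- sum of a permuted function over a fiber -/
lemma sum_fiber_smul (σ : G) (w : I → ℤ) (O : orbitRel.Quotient G I) :
    ∑ i ∈ univ.filter (fun i => (Quotient.mk'' i : orbitRel.Quotient G I) = O), w (σ⁻¹ • i)
      = ∑ i ∈ univ.filter (fun i => (Quotient.mk'' i : orbitRel.Quotient G I) = O), w i := by
  apply Finset.sum_nbij' (fun i => σ⁻¹ • i) (fun i => σ • i) <;>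
    simp [smul_smul, qmk_smul] <;> intros <;> simp_all [qmk_smul]


lemma hom_to_int_eq_zero {H : Type*} [Group H] [Finite H] (φ : H → ℤ)
    (hφ : ∀ a b : H, φ (a * b) = φ a + φ b) : ∀ a, φ a = 0 := by
  intro a
  have key : ∀ k : ℕ, φ (a ^ k) = k * φ a := by
    intro k
    induction k with
    | zero =>
      have h1 : φ 1 = φ 1 + φ 1 := by simpa using hφ 1 1
      simp only [pow_zero, Nat.cast_zero, zero_mul]
      omega
    | succ n ih => rw [pow_succ, hφ, ih]; push_cast; ring
  have h2 := key (orderOf a)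
  rw [pow_orderOf_eq_one] at h2
  have h1 : φ 1 = φ 1 + φ 1 := by simpa using hφ 1 1
  have h3 : (orderOf a : ℤ) * φ a = 0 := by omega
  have h4 : orderOf a ≠ 0 := (orderOf_pos a).ne'
  rcases mul_eq_zero.1 h3 with h | h
  · exact absurd (by exact_mod_cast h) h4
  · exact h

variable {ρ : Representation ℤ G ((I → ℤ) × ℤ × ℤ)}

section Cocycle

variable (hρN : ∀ σ ∈ N, ∀ (v : I → ℤ) (c d : ℤ),
      ρ σ (v, c, d) = (fun j => v (σ⁻¹ • j), c, d))
variable {c : G → (I → ℤ) × ℤ × ℤ} (hc : ∀ g h, c (g * h) = ρ g (c h) + c g)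

include hρN

lemma rhoN_apply {σ : G} (hσ : σ ∈ N) (x : (I → ℤ) × ℤ × ℤ) :
    ρ σ x = (fun j => x.1 (σ⁻¹ • j), x.2.1, x.2.2) := hρN σ hσ x.1 x.2.1 x.2.2

include hc

lemma c_one : c 1 = 0 := by
  have h := hc 1 1
  rw [one_mul, map_one] at h
  have h' : c 1 = c 1 + c 1 := by simpa using h
  exact (add_left_cancel (a := c 1) (h'.symm.trans (add_zero _).symm))

lemma c_snd_fst {n : G} (hn : n ∈ N) : (c n).2.1 = 0 := by
  have := hom_to_int_eq_zero (H := ↥N) (fun a => (c ↑a).2.1) (fun a b => by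
    have h := hc ↑a ↑b
    rw [rhoN_apply hρN a.2] at h
    have := congrArg (fun x => x.2.1) h
    simp only [Subgroup.coe_mul, Prod.snd_add, Prod.fst_add] at this ⊢
    rw [this]; ring) ⟨n, hn⟩
  simpa using this

lemma c_thd {n : G} (hn : n ∈ N) : (c n).2.2 = 0 := by
  have := hom_to_int_eq_zero (H := ↥N) (fun a => (c ↑a).2.2) (fun a b => by
    have h := hc ↑a ↑b
    rw [rhoN_apply hρN a.2] at h
    have := congrArg (fun x => x.2.2) h
    simp only [Subgroup.coe_mul, Prod.snd_add] at this ⊢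
    rw [this]; ring) ⟨n, hn⟩
  simpa using this

lemma c_fst_stab {n : G} {y : I} (hn : n ∈ N) (hny : n • y = y) : (c n).1 y = 0 := by
  have := hom_to_int_eq_zero (H := ↥(N ⊓ MulAction.stabilizer G y)) (fun a => (c ↑a).1 y)
    (fun a b => by
      have h := hc ↑a ↑b
      rw [rhoN_apply hρN a.2.1] at h
      have := congrArg (fun x => x.1 y) h
      simp only [Subgroup.coe_mul, Prod.fst_add, Pi.add_apply] at this ⊢
      have ha' : (↑a : G) • y = y := a.2.2
      have hay : (↑a : G)⁻¹ • y = y := by rw [inv_smul_eq_iff, ha']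
      rw [this, hay]; ring) ⟨n, ⟨hn, hny⟩⟩
  simpa using this

end Cocycle


def vfun (nm : I → G) (c : G → (I → ℤ) × ℤ × ℤ) : I → ℤ := fun y => (c (nm y)).1 y

def Vel (nm : I → G) (c : G → (I → ℤ) × ℤ × ℤ) : (I → ℤ) × ℤ × ℤ := (vfun nm c, 0, 0)

def mel (ρ : Representation ℤ G ((I → ℤ) × ℤ × ℤ)) (τ : G) (nm : I → G)
    (c : G → (I → ℤ) × ℤ × ℤ) : (I → ℤ) × ℤ × ℤ :=
  c τ + ρ τ (Vel nm c) - Vel nm c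

def psiraw (ρ : Representation ℤ G ((I → ℤ) × ℤ × ℤ)) (τ : G)
    (out : orbitRel.Quotient G I → I) (nm : I → G)
    (c : G → (I → ℤ) × ℤ × ℤ) : orbitRel.Quotient G I → ℤ :=
  fun O => (mel ρ τ nm c).1 (out O)

section Main

variable (hN : N.index = 2) (r : ℕ)
variable (hρN : ∀ σ ∈ N, ∀ (v : I → ℤ) (c d : ℤ),
      ρ σ (v, c, d) = (fun j => v (σ⁻¹ • j), c, d))
variable (hρ : ∀ σ ∉ N, ∀ (v : I → ℤ) (c d : ℤ),
      ρ σ (v, c, d) =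
        (fun j => -v (σ⁻¹ • j) - c, c, (∑ i : I, v i) + c * ((r : ℤ) / 2) + d))
variable {τ : G} (hτ : τ ∉ N)
variable {out : orbitRel.Quotient G I → I}
  (hout : ∀ O, (Quotient.mk'' (out O) : orbitRel.Quotient G I) = O)
variable {nm : I → G} (hnmN : ∀ y, nm y ∈ N)
  (hnm : ∀ y, nm y • out (Quotient.mk'' y) = y)
variable (htrans : ∀ i j : I, j ∈ MulAction.orbit G i → ∃ σ ∈ N, σ • i = j)
variable {c : G → (I → ℤ) × ℤ × ℤ} (hc : ∀ g h, c (g * h) = ρ g (c h) + c g)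

include hρ in
lemma rho_apply {σ : G} (hσ : σ ∉ N) (x : (I → ℤ) × ℤ × ℤ) :
    ρ σ x = (fun j => -x.1 (σ⁻¹ • j) - x.2.1, x.2.1,
      (∑ i : I, x.1 i) + x.2.1 * ((r : ℤ) / 2) + x.2.2) := hρ σ hσ x.1 x.2.1 x.2.2

include hρN hnmN hnm hc in
lemma c_fst_eq {n : G} (hn : n ∈ N) (y : I) :
    (c n).1 y = vfun nm c y - vfun nm c (n⁻¹ • y) := by
  set O : orbitRel.Quotient G I := Quotient.mk'' y with hO
  have hqy : (Quotient.mk'' (n⁻¹ • y) : orbitRel.Quotient G I) = O := qmk_smul n⁻¹ y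
  set n2 : G := nm (n⁻¹ • y) with hn2
  have hn2mem : n2 ∈ N := hnmN _
  have hn2act : n2 • out O = n⁻¹ • y := by
    have := hnm (n⁻¹ • y); rwa [hqy] at this
  set ny : G := nm y with hny
  have hnymem : ny ∈ N := hnmN y
  have hnyact : ny • out O = y := by have := hnm y; rwa [← hO] at this
  -- first identity
  have h1 : (c (n * n2)).1 y = (c n2).1 (n⁻¹ • y) + (c n).1 y := by
    have h := hc n n2
    rw [rhoN_apply hρN hn] at h
    simpa using congrArg (fun x => x.1 y) h
  -- second identity
  set hgrp : G := ny⁻¹ * (n * n2) with hh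
  have hmem : hgrp ∈ N := N.mul_mem ((Subgroup.inv_mem_iff N).2 hnymem) (N.mul_mem hn hn2mem)
  have hfix : hgrp • out O = out O := by
    rw [hh, mul_smul, mul_smul, hn2act, smul_inv_smul, inv_smul_eq_iff, hnyact]
  have h2 : (c (n * n2)).1 y = (c hgrp).1 (ny⁻¹ • y) + (c ny).1 y := by
    have heq : ny * hgrp = n * n2 := by rw [hh]; group
    have h := hc ny hgrp
    rw [heq, rhoN_apply hρN hnymem] at h
    simpa using congrArg (fun x => x.1 y) h
  have hyout : ny⁻¹ • y = out O := by rw [inv_smul_eq_iff, hnyact]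
  have h3 : (c hgrp).1 (out O) = 0 := c_fst_stab hρN hc hmem hfix
  rw [hyout, h3] at h2
  have : (c n2).1 (n⁻¹ • y) + (c n).1 y = (c ny).1 y := by rw [← h1, h2]; ring
  simp only [vfun, ← hny, ← hn2]
  linarith [this]

include hρN hnmN hnm hc in
lemma cp_N_zero {n : G} (hn : n ∈ N) :
    c n + (ρ n (Vel nm c) - Vel nm c) = 0 := by
  have h1 : ρ n ((vfun nm c : I → ℤ), (0:ℤ), (0:ℤ)) = ((fun j => vfun nm c (n⁻¹ • j)), 0, 0) := by
    rw [rhoN_apply hρN hn]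
  refine Prod.ext (funext fun y => ?_) (Prod.ext ?_ ?_) <;>
    simp only [Prod.fst_add, Prod.snd_add, Prod.fst_sub, Prod.snd_sub, Pi.add_apply,
      Pi.sub_apply, Vel, h1, Prod.fst_zero, Prod.snd_zero, Pi.zero_apply]
  · rw [c_fst_eq hρN hnmN hnm hc hn y]; ring
  · simpa using c_snd_fst hρN hc hn
  · simpa using c_thd hρN hc hn

lemma add_cb_cocycle (hc : ∀ g h, c (g * h) = ρ g (c h) + c g) (x : (I → ℤ) × ℤ × ℤ)
    (g h : G) :
    c (g * h) + (ρ (g * h) x - x) = ρ g (c h + (ρ h x - x)) + (c g + (ρ g x - x)) := by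
  rw [hc, map_mul]
  simp only [map_add, map_sub, Module.End.mul_apply]
  abel

include hN hρN hnmN hnm hc hτ in
lemma m_inv {n : G} (hn : n ∈ N) : ρ n (mel ρ τ nm c) = mel ρ τ nm c := by
  -- it suffices to show invariance under τ * n * τ⁻¹ for all n ∈ N
  have key : ∀ n' ∈ N, ρ (τ * n' * τ⁻¹) (mel ρ τ nm c) = mel ρ τ nm c := by
    intro n' hn'
    have hcb := add_cb_cocycle hc (Vel nm c)
    -- c'(τ * n') = mel  via  τ * n'
    have e1 : c (τ * n') + (ρ (τ * n') (Vel nm c) - Vel nm c) = mel ρ τ nm c := by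
      have := hcb τ n'
      rw [this, cp_N_zero hρN hnmN hnm hc hn']
      simp only [map_zero, zero_add, mel]
      abel
    -- c'(τ * n') = ρ(τ n' τ⁻¹) mel  via  (τ n' τ⁻¹) * τ
    have e2 : c (τ * n') + (ρ (τ * n') (Vel nm c) - Vel nm c)
        = ρ (τ * n' * τ⁻¹) (mel ρ τ nm c) := by
      have heq : (τ * n' * τ⁻¹) * τ = τ * n' := by group
      have := hcb (τ * n' * τ⁻¹) τ
      rw [heq] at this
      rw [this, cp_N_zero hρN hnmN hnm hc (conj_mem hN hn' τ)]
      have : c τ + (ρ τ (Vel nm c) - Vel nm c) = mel ρ τ nm c := by rw [mel]; abel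
      rw [this, add_zero]
    have := e1.symm.trans e2
    exact this.symm
  have := key (τ⁻¹ * n * τ) (by
    have := conj_mem hN hn τ⁻¹
    simpa using this)
  have heq : τ * (τ⁻¹ * n * τ) * τ⁻¹ = n := by group
  rwa [heq] at this

include hN hρN hnmN hnm hτ hc htrans hout in
lemma m_fst_const (y : I) :
    (mel ρ τ nm c).1 y = psiraw ρ τ out nm c (Quotient.mk'' y) := by
  set O : orbitRel.Quotient G I := Quotient.mk'' y with hO
  have horb : y ∈ MulAction.orbit G (out O) := by
    have : (Quotient.mk'' y : orbitRel.Quotient G I) = Quotient.mk'' (out O) := by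
      rw [← hO, hout]
    exact orbitRel_apply.1 (Quotient.exact' this)
  obtain ⟨σ, hσN, hσ⟩ := htrans (out O) y horb
  have hinv := m_inv hN hρN hτ hnmN hnm hc hσN
  rw [rhoN_apply hρN hσN] at hinv
  have := congrArg (fun x => x.1 y) hinv
  simp only at this
  have hso : σ⁻¹ • y = out O := by rw [inv_smul_eq_iff]; exact hσ.symm
  rw [psiraw, ← this, hso]

include hN hρN hρ hnmN hnm hτ hc in
lemma m_snd : (mel ρ τ nm c).2.1 = 0 := by
  have hττ : τ * τ ∈ N := mul_mem_of_not hN hτ hτ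
  have hcb := add_cb_cocycle hc (Vel nm c) τ τ
  rw [cp_N_zero hρN hnmN hnm hc hττ] at hcb
  have hmel : c τ + (ρ τ (Vel nm c) - Vel nm c) = mel ρ τ nm c := by rw [mel]; abel
  rw [hmel] at hcb
  -- 0 = ρ τ mel + mel
  have h := congrArg (fun x => x.2.1) hcb
  rw [rho_apply r hρ hτ] at h
  simp only [Prod.snd_add, Prod.fst_add, Prod.snd_zero, Prod.fst_zero] at h
  omega

include hN hρN hρ hnmN hnm hτ hc in
lemma m_sum : (∑ i : I, (mel ρ τ nm c).1 i) + 2 * (mel ρ τ nm c).2.2 = 0 := by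
  have hττ : τ * τ ∈ N := mul_mem_of_not hN hτ hτ
  have hcb := add_cb_cocycle hc (Vel nm c) τ τ
  rw [cp_N_zero hρN hnmN hnm hc hττ] at hcb
  have hmel : c τ + (ρ τ (Vel nm c) - Vel nm c) = mel ρ τ nm c := by rw [mel]; abel
  rw [hmel] at hcb
  have h := congrArg (fun x => x.2.2) hcb
  rw [rho_apply r hρ hτ] at h
  simp only [Prod.snd_add, Prod.snd_zero] at h
  have h2 := m_snd hN r hρN hρ hτ hnmN hnm hc
  rw [h2] at h
  simp only [zero_mul, add_zero] at h
  omega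


include hN hρN hρ hτ hout hnmN hnm htrans hc in
lemma coboundary_of_dvd (hψ : ∀ O, 2 ∣ psiraw ρ τ out nm c O) :
    ∃ x, ∀ g, ρ g x - x = c g := by
  choose α hα using hψ
  set w : I → ℤ := fun i => -(α (Quotient.mk'' i)) with hwdef
  set m0 : (I → ℤ) × ℤ × ℤ := (w, 0, ∑ i : I, w i) with hm0
  have hw : ∀ (σ : G) (j : I), w (σ⁻¹ • j) = w j := by
    intro σ j
    simp only [hwdef, qmk_smul]
  have hm0N : ∀ n ∈ N, ρ n m0 = m0 := by
    intro n hn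
    rw [hm0, rhoN_apply hρN hn]
    exact Prod.ext (funext fun j => hw n j) rfl
  have hMfst : ∀ y : I, (mel ρ τ nm c).1 y = 2 * α (Quotient.mk'' y) := by
    intro y
    rw [m_fst_const hN hρN hτ hout hnmN hnm htrans hc y, hα]
  have halpha : ∑ i : I, (mel ρ τ nm c).1 i = 2 * ∑ i : I, α (Quotient.mk'' i) := by
    rw [Finset.sum_congr rfl fun i _ => hMfst i, Finset.mul_sum]
  have hwsum : ∑ i : I, w i = -∑ i : I, α (Quotient.mk'' i) := by
    simp [hwdef]
  have hsum := m_sum hN r hρN hρ hτ hnmN hnm hc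
  have hm0τ : ρ τ m0 - m0 = mel ρ τ nm c := by
    rw [hm0, rho_apply r hρ hτ]
    refine Prod.ext (funext fun y => ?_) (Prod.ext ?_ ?_)
    · simp only [Prod.fst_sub, Pi.sub_apply]
      rw [hMfst y]
      have h1 : w (τ⁻¹ • y) = w y := hw τ y
      simp only [h1, hwdef, qmk_smul]
      ring
    · simp only [Prod.snd_sub, Prod.fst_sub]
      rw [m_snd hN r hρN hρ hτ hnmN hnm hc]
      norm_num
    · simp only [Prod.snd_sub]
      have : ((0:ℤ)) * ((r:ℤ)/2) = 0 := by ring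
      rw [this]
      linarith [hsum, halpha, hwsum]
  refine ⟨m0 - Vel nm c, fun g => ?_⟩
  have hsplit : ρ g (m0 - Vel nm c) - (m0 - Vel nm c)
      = (ρ g m0 - m0) - (ρ g (Vel nm c) - Vel nm c) := by
    rw [map_sub]; abel
  rw [hsplit]
  by_cases hg : g ∈ N
  · rw [hm0N g hg]
    have h2 : ρ g (Vel nm c) - Vel nm c = -c g := by
      have h0 := cp_N_zero hρN hnmN hnm hc hg
      rw [add_comm] at h0
      exact eq_neg_of_add_eq_zero_left h0
    rw [h2]
    abel
  · set n : G := g * τ⁻¹ with hn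
    have hnN : n ∈ N := mul_mem_of_not hN hg (fun h => hτ ((Subgroup.inv_mem_iff N).1 h))
    have hgeq : n * τ = g := by rw [hn]; group
    have hLHS : ρ g m0 - m0 = ρ n (mel ρ τ nm c) := by
      rw [← hgeq, map_mul]
      have : ρ n ((ρ τ) m0) - m0 = ρ n (ρ τ m0 - m0) + (ρ n m0 - m0) := by
        rw [map_sub]; abel
      rw [Module.End.mul_apply, this, hm0N n hnN, hm0τ]
      abel
    have hRHS := add_cb_cocycle hc (Vel nm c) n τ
    rw [hgeq, cp_N_zero hρN hnmN hnm hc hnN] at hRHS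
    have hmel : c τ + (ρ τ (Vel nm c) - Vel nm c) = mel ρ τ nm c := by rw [mel]; abel
    rw [hmel, add_zero] at hRHS
    rw [hLHS, ← hRHS]
    abel

include hρN hρ hτ hout hnmN hnm in
lemma psiraw_cb (x : (I → ℤ) × ℤ × ℤ) (O : orbitRel.Quotient G I) :
    psiraw ρ τ out nm (fun g => ρ g x - x) O = -x.2.1 - 2 * x.1 (out O) := by
  have hvf : ∀ y : I, vfun nm (fun g => ρ g x - x) y
      = x.1 (out (Quotient.mk'' y)) - x.1 y := by
    intro y
    show (ρ (nm y) x - x).1 y = _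
    rw [rhoN_apply hρN (hnmN y)]
    have h5 : (nm y)⁻¹ • y = out (Quotient.mk'' y) := by
      rw [inv_smul_eq_iff, hnm y]
    simp only [Prod.fst_sub, Pi.sub_apply, h5]
  have h1 : (Quotient.mk'' (out O) : orbitRel.Quotient G I) = O := hout O
  have h2 : (Quotient.mk'' (τ⁻¹ • out O) : orbitRel.Quotient G I) = O :=
    (qmk_smul τ⁻¹ (out O)).trans h1
  have h3 := rho_apply r hρ hτ x
  have h4 := rho_apply r hρ hτ ((vfun nm fun g => (ρ g) x - x : I → ℤ), (0:ℤ), (0:ℤ))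
  simp only [psiraw, mel, Prod.fst_add, Prod.fst_sub, Pi.add_apply, Pi.sub_apply, h3, h4, Vel,
    hvf, h1, h2]
  ring

include hN hρN hρ hτ hout hnmN hnm in
lemma exists_cocycle (a : orbitRel.Quotient G I → ℤ) (s : ℤ)
    (hs : ∑ O : orbitRel.Quotient G I, ((fib G I O).card : ℤ) * a O = 2 * s) :
    ∃ c : G → (I → ℤ) × ℤ × ℤ, (∀ g h, c (g * h) = ρ g (c h) + c g) ∧
      ∀ O, psiraw ρ τ out nm c O = a O := by
  set m : (I → ℤ) × ℤ × ℤ := ((fun i => a (Quotient.mk'' i)), 0, -s) with hm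
  have hminv : ∀ n ∈ N, ρ n m = m := by
    intro n hn
    rw [hm, rhoN_apply hρN hn]
    exact Prod.ext (funext fun j => by simp only [qmk_smul]) rfl
  have hsa : ∑ i : I, a (Quotient.mk'' i) = 2 * s := by rw [sum_comp_qmk, hs]
  have hmτ : ρ τ m = -m := by
    rw [hm, rho_apply r hρ hτ]
    refine Prod.ext (funext fun y => ?_) (Prod.ext ?_ ?_)
    · show -a (Quotient.mk'' (τ⁻¹ • y)) - 0 = -a (Quotient.mk'' y)
      rw [qmk_smul]
      ring
    · show (0 : ℤ) = -0
      ring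
    · show (∑ i : I, a (Quotient.mk'' i)) + 0 * ((r : ℤ)/2) + -s = -(-s)
      rw [hsa]
      ring
  have hτinv : τ⁻¹ ∉ N := fun h => hτ ((Subgroup.inv_mem_iff N).1 h)
  set c0 : G → (I → ℤ) × ℤ × ℤ := fun σ => if σ ∈ N then 0 else ρ (σ * τ⁻¹) m with hc0
  refine ⟨c0, fun g h => ?_, fun O => ?_⟩
  · have hc0app : ∀ σ, c0 σ = if σ ∈ N then 0 else ρ (σ * τ⁻¹) m := fun σ => rfl
    rw [hc0app, hc0app, hc0app]
    by_cases hg : g ∈ N <;> by_cases hh : h ∈ N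
    · rw [if_pos (N.mul_mem hg hh), if_pos hg, if_pos hh, map_zero, add_zero]
    · have hgh : g * h ∉ N := mul_not_mem_left hN hg hh
      rw [if_neg hgh, if_neg hh, if_pos hg, add_zero, ← Module.End.mul_apply, ← map_mul,
        show g * (h * τ⁻¹) = g * h * τ⁻¹ by group]
    · have hgh : g * h ∉ N := mul_not_mem_right hN hg hh
      rw [if_neg hgh, if_pos hh, if_neg hg, map_zero, zero_add,
        show g * h * τ⁻¹ = (g * τ⁻¹) * (τ * h * τ⁻¹) by group, map_mul, Module.End.mul_apply,
        hminv _ (conj_mem hN hh τ)]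
    · have hgh : g * h ∈ N := mul_mem_of_not hN hg hh
      rw [if_pos hgh, if_neg hg, if_neg hh]
      have h1 : ρ (h * τ⁻¹) m = m := hminv _ (mul_mem_of_not hN hh hτinv)
      have h2 : ρ g m = -(ρ (g * τ⁻¹) m) := by
        rw [show g = (g * τ⁻¹) * τ by group, map_mul, Module.End.mul_apply, hmτ, map_neg]
        rw [show g * τ⁻¹ * τ * τ⁻¹ = g * τ⁻¹ by group]
      rw [h1, h2]
      abel
  · have hV : Vel nm c0 = 0 := by
      refine Prod.ext (funext fun y => ?_) rfl
      show (c0 (nm y)).1 y = 0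
      have hc0app : c0 (nm y) = if nm y ∈ N then 0 else ρ (nm y * τ⁻¹) m := rfl
      rw [hc0app, if_pos (hnmN y)]
      rfl
    have hcτ : c0 τ = m := by
      have hc0app : c0 τ = if τ ∈ N then 0 else ρ (τ * τ⁻¹) m := rfl
      rw [hc0app, if_neg hτ, mul_inv_cancel, map_one, Module.End.one_apply]
    rw [psiraw, mel, hV, map_zero, sub_zero, add_zero, hcτ]
    show a (Quotient.mk'' (out O)) = a O
    rw [hout O]

end Main


section Linearity
variable {ρ : Representation ℤ G ((I → ℤ) × ℤ × ℤ)}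
variable (τ : G) (out : orbitRel.Quotient G I → I) (nm : I → G)

lemma Vel_add (c c' : G → (I → ℤ) × ℤ × ℤ) :
    Vel nm (c + c') = Vel nm c + Vel nm c' := by
  refine Prod.ext (funext fun y => ?_) ?_ <;> simp [Vel, vfun]

lemma Vel_smul (z : ℤ) (c : G → (I → ℤ) × ℤ × ℤ) :
    Vel nm (z • c) = z • Vel nm c := by
  refine Prod.ext (funext fun y => ?_) ?_ <;> simp [Vel, vfun]

lemma psiraw_add (c c' : G → (I → ℤ) × ℤ × ℤ) (O : orbitRel.Quotient G I) :
    psiraw ρ τ out nm (c + c') O = psiraw ρ τ out nm c O + psiraw ρ τ out nm c' O := by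
  simp only [psiraw, mel, Vel_add, map_add, Pi.add_apply, Prod.fst_add, Prod.fst_sub,
    Pi.sub_apply]
  ring

lemma psiraw_smul (z : ℤ) (c : G → (I → ℤ) × ℤ × ℤ) (O : orbitRel.Quotient G I) :
    psiraw ρ τ out nm (z • c) O = z * psiraw ρ τ out nm c O := by
  simp only [psiraw, mel, Vel_smul, map_smul, Pi.smul_apply, Prod.fst_sub, Prod.fst_add,
    Prod.smul_fst, Pi.sub_apply, Pi.add_apply, smul_eq_mul]
  ring

lemma cb_raw_cocycle (x : (I → ℤ) × ℤ × ℤ) (g h : G) :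
    ρ (g * h) x - x = ρ g (ρ h x - x) + (ρ g x - x) := by
  rw [map_mul]
  simp only [map_sub, Module.End.mul_apply]
  abel

lemma Vel_sub (c c' : G → (I → ℤ) × ℤ × ℤ) :
    Vel nm (c - c') = Vel nm c - Vel nm c' := by
  refine Prod.ext (funext fun y => ?_) ?_ <;> simp [Vel, vfun]

lemma psiraw_sub (c c' : G → (I → ℤ) × ℤ × ℤ) (O : orbitRel.Quotient G I) :
    psiraw ρ τ out nm (c - c') O = psiraw ρ τ out nm c O - psiraw ρ τ out nm c' O := by
  simp only [psiraw, mel, Vel_sub, map_sub, Pi.sub_apply, Prod.fst_add, Prod.fst_sub,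
    Pi.add_apply]
  ring

end Linearity

lemma fib_card (i : I) :
    (fib G I (Quotient.mk'' i : orbitRel.Quotient G I)).card = Nat.card (orbit G i) := by
  rw [Nat.card_eq_fintype_card, ← Set.toFinset_card]
  congr 1
  ext x
  simp only [fib, Finset.mem_filter, Finset.mem_univ, true_and, Set.mem_toFinset]
  rw [Quotient.eq'']
  exact orbitRel_apply

lemma sum_fib_card : ∑ O : orbitRel.Quotient G I, (fib G I O).card = Fintype.card I := by
  have h := sum_comp_qmk (G := G) (I := I) (fun _ => (1 : ℤ))
  simp only [mul_one, Finset.sum_const, smul_eq_mul] at h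
  have : ((Fintype.card I : ℤ)) = ∑ O : orbitRel.Quotient G I, ((fib G I O).card : ℤ) := by
    simpa [Finset.card_univ] using h
  exact_mod_cast this.symm

lemma exists_psi2 {𝕜 V : Type*} [Field 𝕜] [AddCommGroup V] [Module 𝕜 V]
    [FiniteDimensional 𝕜 V] (S : Submodule 𝕜 V) (u : V) (hu : u ∈ S) (k : ℕ)
    (hk : Module.finrank 𝕜 (S ⧸ (𝕜 ∙ (⟨u, hu⟩ : S))) = k) :
    ∃ ψ : V →ₗ[𝕜] (Fin k → 𝕜),
      (∀ y : Fin k → 𝕜, ∃ v ∈ S, ψ v = y) ∧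
      (∀ v ∈ S, ψ v = 0 → ∃ t : 𝕜, v = t • u) ∧
      ψ u = 0 := by
  obtain ⟨C, hC⟩ := Submodule.exists_isCompl S
  set π := S.linearProjOfIsCompl C hC with hπ
  have hfr : Module.finrank 𝕜 (↥S ⧸ (𝕜 ∙ (⟨u, hu⟩ : S))) = Module.finrank 𝕜 (Fin k → 𝕜) := by
    rw [hk, Module.finrank_fintype_fun_eq_card, Fintype.card_fin]
  set e := LinearEquiv.ofFinrankEq _ _ hfr with he
  set ψ : V →ₗ[𝕜] (Fin k → 𝕜) :=
    (e.toLinearMap.comp (𝕜 ∙ (⟨u, hu⟩ : S)).mkQ).comp π with hψ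
  have hψS : ∀ v (hv : v ∈ S), ψ v = e ((𝕜 ∙ (⟨u, hu⟩ : S)).mkQ ⟨v, hv⟩) := by
    intro v hv
    have : π v = ⟨v, hv⟩ := Submodule.linearProjOfIsCompl_apply_left hC ⟨v, hv⟩
    simp [hψ, this]
  refine ⟨ψ, ?_, ?_, ?_⟩
  · intro y
    obtain ⟨q, hq⟩ := Submodule.mkQ_surjective (𝕜 ∙ (⟨u, hu⟩ : S)) (e.symm y)
    refine ⟨(q : V), q.2, ?_⟩
    rw [hψS q q.2]
    simp only [Subtype.coe_eta, hq]
    simp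
  · intro v hv h0
    rw [hψS v hv] at h0
    have h1 : ((𝕜 ∙ (⟨u, hu⟩ : S)).mkQ ⟨v, hv⟩) = 0 := by
      apply e.injective
      simpa using h0
    rw [Submodule.mkQ_apply, Submodule.Quotient.mk_eq_zero] at h1
    obtain ⟨t, ht⟩ := Submodule.mem_span_singleton.1 h1
    exact ⟨t, congrArg Subtype.val ht.symm⟩
  · rw [hψS u hu]
    have : ((⟨u, hu⟩ : S) : S) ∈ (𝕜 ∙ (⟨u, hu⟩ : S)) := Submodule.mem_span_singleton_self _
    rw [Submodule.mkQ_apply, (Submodule.Quotient.mk_eq_zero _).2 this]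
    simp

lemma mem_cb_iff (f : groupCohomology.cocycles₁ (Rep.of ρ)) :
    f ∈ LinearMap.range (groupCohomology.shortComplexH1 (Rep.of ρ)).moduleCatToCycles ↔
      ∃ x : (I → ℤ) × ℤ × ℤ, ∀ g, ρ g x - x = f g := by
  constructor
  · rintro ⟨x, rfl⟩
    exact ⟨x, fun g => rfl⟩
  · rintro ⟨x, hx⟩
    exact ⟨x, Subtype.ext (funext hx)⟩

end H1EvenAux

set_option maxHeartbeats 2000000 in
/-- First group cohomology of the lattice `M = ⟨e_i (i ∈ I), f, g⟩` with
`σ·e_i = e_{σi}`, `σ·f = f`, `σ·g = g` for `σ ∈ N`, and `σ·e_i = −e_{σi} + g`,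
`σ·f = f − ∑ e_i + (r/2)g`, `σ·g = g` for `σ ∉ N`, where `|I| = r` is even and
`N` (of index 2) acts transitively on each `G`-orbit:
`H¹(G, M) ≅ (ℤ/2ℤ)^{r′−1}` if every orbit has even cardinality, and
`H¹(G, M) ≅ (ℤ/2ℤ)^{r′−2}` if some orbit has odd cardinality
(`r′` = number of orbits). Here `M` is realised as `(I → ℤ) × ℤ × ℤ`, with `e_i`
the indicator of `i`, `f = (0, 1, 0)` and `g = (0, 0, 1)`. -/
theorem h1_even_case
    (G : Type) [Group G] [Fintype G] (N : Subgroup G) (hN : N.index = 2)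
    (I : Type) [Fintype I] [MulAction G I]
    (r r' : ℕ) (hr : Fintype.card I = r) (heven : Even r)
    (hr' : Nat.card (MulAction.orbitRel.Quotient G I) = r')
    (htrans : ∀ i j : I, j ∈ MulAction.orbit G i → ∃ σ ∈ N, σ • i = j)
    (ρ : Representation ℤ G ((I → ℤ) × ℤ × ℤ))
    (hρN : ∀ σ ∈ N, ∀ (v : I → ℤ) (c d : ℤ),
      ρ σ (v, c, d) = (fun j => v (σ⁻¹ • j), c, d))
    (hρ : ∀ σ ∉ N, ∀ (v : I → ℤ) (c d : ℤ),
      ρ σ (v, c, d) =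
        (fun j => -v (σ⁻¹ • j) - c, c, (∑ i : I, v i) + c * ((r : ℤ) / 2) + d)) :
    ((∀ i : I, Even (Nat.card (MulAction.orbit G i))) →
        Nonempty (groupCohomology.H1 (Rep.of ρ) ≃+ (Fin (r' - 1) → ZMod 2))) ∧
    ((∃ i : I, Odd (Nat.card (MulAction.orbit G i))) →
        Nonempty (groupCohomology.H1 (Rep.of ρ) ≃+ (Fin (r' - 2) → ZMod 2))) := by
  classical
  obtain ⟨τ, hτ⟩ := H1EvenAux.exists_not_mem hN
  set out : MulAction.orbitRel.Quotient G I → I := fun O => Quotient.out O with hout_def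
  have hout : ∀ O : MulAction.orbitRel.Quotient G I,
      (Quotient.mk'' (out O) : MulAction.orbitRel.Quotient G I) = O :=
    fun O => Quotient.out_eq' O
  have hex : ∀ y : I, ∃ σ, σ ∈ N ∧ σ • out (Quotient.mk'' y) = y := by
    intro y
    have h1 : (Quotient.mk'' y : MulAction.orbitRel.Quotient G I)
        = Quotient.mk'' (out (Quotient.mk'' y)) := (hout _).symm
    have h2 : y ∈ MulAction.orbit G (out (Quotient.mk'' y)) :=
      MulAction.orbitRel_apply.1 (Quotient.exact' h1)
    obtain ⟨σ, hσ1, hσ2⟩ := htrans _ _ h2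
    exact ⟨σ, hσ1, hσ2⟩
  choose nm hnmN hnm using hex
  have h2Z : ((2 : ℤ) : ZMod 2) = 0 := by decide
  have hZcases : ∀ t : ZMod 2, t = 0 ∨ t = 1 := by decide
  have hcast_even : ∀ n : ℕ, Even n → ((n : ZMod 2) = 0) := by
    intro n hn
    obtain ⟨t, ht⟩ := hn
    subst ht
    push_cast
    rw [show ((t : ZMod 2) + t) = 2 * t by ring, show (2 : ZMod 2) = 0 by decide, zero_mul]
  have hcast_odd : ∀ n : ℕ, Odd n → ((n : ZMod 2) = 1) := by
    intro n hn
    obtain ⟨t, ht⟩ := hn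
    subst ht
    push_cast
    rw [show ((2:ZMod 2) * t + 1) = 2 * t + 1 by ring, show (2 : ZMod 2) = 0 by decide]
    ring
  set nbar : MulAction.orbitRel.Quotient G I → ZMod 2 :=
    fun O => ((H1EvenAux.fib G I O).card : ZMod 2) with hnbar
  set ℓ : (MulAction.orbitRel.Quotient G I → ZMod 2) →ₗ[ZMod 2] ZMod 2 :=
    { toFun := fun f => ∑ O, nbar O * f O
      map_add' := by
        intro f g
        simp [mul_add, Finset.sum_add_distrib]
      map_smul' := by
        intro t f
        simp only [smul_eq_mul, RingHom.id_apply, Pi.smul_apply]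
        rw [Finset.mul_sum]
        exact Finset.sum_congr rfl fun O _ => by ring } with hl
  have hlapp : ∀ f, ℓ f = ∑ O, nbar O * f O := fun f => rfl
  set u : MulAction.orbitRel.Quotient G I → ZMod 2 := fun _ => 1 with hu_def
  have hsum_nbar : ∑ O, nbar O = (r : ZMod 2) := by
    rw [hnbar, ← Nat.cast_sum, H1EvenAux.sum_fib_card, hr]
  have huS : u ∈ LinearMap.ker ℓ := by
    rw [LinearMap.mem_ker, hlapp]
    simp only [hu_def, mul_one]
    rw [hsum_nbar, hcast_even r heven]
  -- the master construction
  have key : ∀ k : ℕ,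
      Module.finrank (ZMod 2)
        (↥(LinearMap.ker ℓ) ⧸ ((ZMod 2) ∙ (⟨u, huS⟩ : LinearMap.ker ℓ))) = k →
      Nonempty (groupCohomology.H1 (Rep.of ρ) ≃+ (Fin k → ZMod 2)) := by
    intro k hk
    obtain ⟨ψ, hψ1, hψ2, hψ3⟩ := H1EvenAux.exists_psi2 (LinearMap.ker ℓ) u huS k hk
    set vv : LinearMap.ker (groupCohomology.shortComplexH1 (Rep.of ρ)).g.hom → (G → (I → ℤ) × ℤ × ℤ) :=
      fun f => (f.1 : G → (I → ℤ) × ℤ × ℤ) with hvv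
    have hvv_add : ∀ f g, vv (f + g) = vv f + vv g := fun f g => rfl
    have hvv_smul : ∀ (z : ℤ) f, vv (z • f) = z • vv f := fun z f => rfl
    have hcoc : ∀ f : LinearMap.ker (groupCohomology.shortComplexH1 (Rep.of ρ)).g.hom, ∀ g h : G,
        (vv f) (g * h) = ρ g ((vv f) h) + (vv f) g := by
      intro f g h
      exact (groupCohomology.mem_cocycles₁_iff (A := Rep.of ρ) f.1).1 f.2 g h
    set Ψm : (G → (I → ℤ) × ℤ × ℤ) → (MulAction.orbitRel.Quotient G I → ZMod 2) :=
      fun c O => ((H1EvenAux.psiraw ρ τ out nm c O : ℤ) : ZMod 2) with hΨm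
    set Θ : LinearMap.ker (groupCohomology.shortComplexH1 (Rep.of ρ)).g.hom →ₗ[ℤ] (Fin k → ZMod 2) :=
      { toFun := fun f => ψ (Ψm (vv f))
        map_add' := by
          intro f g
          have h1 : Ψm (vv (f + g)) = Ψm (vv f) + Ψm (vv g) := by
            rw [hvv_add]
            funext O
            simp only [hΨm, Pi.add_apply]
            rw [H1EvenAux.psiraw_add]
            push_cast
            ring
          show ψ (Ψm (vv (f + g))) = ψ (Ψm (vv f)) + ψ (Ψm (vv g))
          rw [h1, map_add]
        map_smul' := by
          intro z f
          have h1 : Ψm (vv (z • f)) = (z : ZMod 2) • Ψm (vv f) := by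
            rw [hvv_smul]
            funext O
            simp only [hΨm, Pi.smul_apply]
            rw [H1EvenAux.psiraw_smul]
            push_cast
            rw [smul_eq_mul]
          show ψ (Ψm (vv (z • f))) = z • ψ (Ψm (vv f))
          rw [h1, map_smul, Int.cast_smul_eq_zsmul]
      } with hΘ
    have hΘapp : ∀ f, Θ f = ψ (Ψm (vv f)) := fun f => rfl
    have hpar : ∀ (f : G → (I → ℤ) × ℤ × ℤ), (∀ g h, f (g * h) = ρ g (f h) + f g) →
        ℓ (Ψm f) = 0 := by
      intro f hf
      have h1 : ∑ i : I, (H1EvenAux.mel ρ τ nm f).1 i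
          = ∑ O, ((H1EvenAux.fib G I O).card : ℤ) * H1EvenAux.psiraw ρ τ out nm f O := by
        rw [← H1EvenAux.sum_comp_qmk]
        exact Finset.sum_congr rfl fun i _ =>
          H1EvenAux.m_fst_const hN hρN hτ hout hnmN hnm htrans hf i
      have h2 := H1EvenAux.m_sum hN r hρN hρ hτ hnmN hnm hf
      have h3 : ℓ (Ψm f)
          = ((∑ O, ((H1EvenAux.fib G I O).card : ℤ)
              * H1EvenAux.psiraw ρ τ out nm f O : ℤ) : ZMod 2) := by
        rw [hlapp]
        push_cast
        refine Finset.sum_congr rfl fun O _ => ?_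
        simp only [hnbar, hΨm]
        try push_cast
        try ring
        try rfl
      rw [h3, ← h1, show ∑ i : I, (H1EvenAux.mel ρ τ nm f).1 i
        = -(2 * (H1EvenAux.mel ρ τ nm f).2.2) by linarith]
      push_cast
      rw [show ((2 : ZMod 2)) = 0 by decide]
      ring
    have hcb_psi : ∀ (x : (I → ℤ) × ℤ × ℤ),
        Ψm (fun g => ρ g x - x) = (((x.2.1 : ℤ) : ZMod 2)) • u := by
      intro x
      funext O
      simp only [hΨm]
      rw [H1EvenAux.psiraw_cb r hρN hρ hτ hout hnmN hnm x O]
      push_cast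
      rw [show ((2 : ZMod 2)) = 0 by decide]
      simp only [hu_def, Pi.smul_apply, smul_eq_mul, mul_one]
      rw [CharTwo.neg_eq]
      ring
    -- coboundaries = kernel of Θ
    have hBker : (LinearMap.range (groupCohomology.shortComplexH1 (Rep.of ρ)).moduleCatToCycles).restrictScalars ℤ
        = LinearMap.ker Θ := by
      apply le_antisymm
      · intro f hf
        obtain ⟨x, hx⟩ := (H1EvenAux.mem_cb_iff f).1 hf
        set x' : (I → ℤ) × ℤ × ℤ := x with hx'
        have hfeq : vv f = fun g => ρ g x' - x' := funext fun g => (hx g).symm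
        rw [LinearMap.mem_ker, hΘapp, hfeq, hcb_psi, map_smul, hψ3, smul_zero]
      · intro f hf
        rw [LinearMap.mem_ker, hΘapp] at hf
        have hfS : Ψm (vv f) ∈ LinearMap.ker ℓ := hpar (vv f) (hcoc f)
        obtain ⟨t, ht⟩ := hψ2 (Ψm (vv f)) hfS hf
        rcases hZcases t with h0 | h1
        · -- Ψm f.1 = 0
          rw [h0, zero_smul] at ht
          have hdvd : ∀ O, 2 ∣ H1EvenAux.psiraw ρ τ out nm (vv f) O := by
            intro O
            have := congrFun ht O
            simp only [hΨm, Pi.zero_apply] at this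
            exact_mod_cast (ZMod.intCast_zmod_eq_zero_iff_dvd _ 2).1 this
          obtain ⟨x, hx⟩ := H1EvenAux.coboundary_of_dvd hN r hρN hρ hτ hout hnmN hnm htrans
            (hcoc f) hdvd
          exact (H1EvenAux.mem_cb_iff f).2 ⟨x, fun g => hx g⟩
        · -- Ψm f.1 = u : subtract the standard coboundary
          rw [h1, one_smul] at ht
          set xs : (I → ℤ) × ℤ × ℤ := ((fun _ => 0 : I → ℤ), 1, 0) with hxs
          set f2 : G → (I → ℤ) × ℤ × ℤ := vv f - (fun g => ρ g xs - xs) with hf2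
          have hf2coc : ∀ g h, f2 (g * h) = ρ g (f2 h) + f2 g := by
            intro g h
            have e0 : ∀ σ, f2 σ = vv f σ - (ρ σ xs - xs) := fun σ => rfl
            rw [e0, e0, e0, hcoc f g h, H1EvenAux.cb_raw_cocycle xs g h]
            simp only [map_sub]
            abel
          have hdvd : ∀ O, 2 ∣ H1EvenAux.psiraw ρ τ out nm f2 O := by
            intro O
            have hv : ((H1EvenAux.psiraw ρ τ out nm f2 O : ℤ) : ZMod 2) = 0 := by
              rw [hf2, H1EvenAux.psiraw_sub]
              push_cast
              have e1 : ((H1EvenAux.psiraw ρ τ out nm (vv f) O : ℤ) : ZMod 2) = 1 := by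
                have := congrFun ht O
                simp only [hΨm, hu_def] at this
                exact this
              have e2 : ((H1EvenAux.psiraw ρ τ out nm (fun g => ρ g xs - xs) O : ℤ)
                  : ZMod 2) = 1 := by
                rw [H1EvenAux.psiraw_cb r hρN hρ hτ hout hnmN hnm xs O]
                simp only [hxs]
                decide
              rw [e1, e2]
              ring
            exact_mod_cast (ZMod.intCast_zmod_eq_zero_iff_dvd _ 2).1 hv
          obtain ⟨x, hx⟩ := H1EvenAux.coboundary_of_dvd hN r hρN hρ hτ hout hnmN hnm htrans
            hf2coc hdvd
          refine (H1EvenAux.mem_cb_iff f).2 ⟨x + xs, fun g => ?_⟩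
          show ρ g (x + xs) - (x + xs) = vv f g
          have h5 : ρ g (x + xs) - (x + xs) = (ρ g x - x) + (ρ g xs - xs) := by
            rw [map_add]; abel
          rw [h5, hx g]
          show (vv f - fun g' => ρ g' xs - xs) g + (ρ g xs - xs) = vv f g
          simp only [Pi.sub_apply]
          abel
    have hsurj : Function.Surjective Θ := by
      intro y
      obtain ⟨v, hvS, hvy⟩ := hψ1 y
      set a : MulAction.orbitRel.Quotient G I → ℤ := fun O => if v O = 1 then 1 else 0 with ha
      have hacast : ∀ O, ((a O : ℤ) : ZMod 2) = v O := by
        intro O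
        by_cases h : v O = 1
        · simp [ha, h]
        · rcases hZcases (v O) with h0 | h1
          · simp [ha, h, h0]
          · exact absurd h1 h
      have hpar2 : ((∑ O, ((H1EvenAux.fib G I O).card : ℤ) * a O : ℤ) : ZMod 2) = 0 := by
        have hterm : ∀ O : MulAction.orbitRel.Quotient G I,
            ((((H1EvenAux.fib G I O).card : ℤ) * a O : ℤ) : ZMod 2) = nbar O * v O := by
          intro O
          rw [Int.cast_mul, hacast O]
          show (((H1EvenAux.fib G I O).card : ℤ) : ZMod 2) * v O
            = ((H1EvenAux.fib G I O).card : ZMod 2) * v O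
          norm_cast
        rw [Int.cast_sum, Finset.sum_congr rfl fun O _ => hterm O, ← hlapp]
        exact hvS
      obtain ⟨s, hs⟩ := (ZMod.intCast_zmod_eq_zero_iff_dvd _ 2).1 hpar2
      obtain ⟨c0, hc0coc, hc0psi⟩ :=
        H1EvenAux.exists_cocycle hN r hρN hρ hτ hout hnmN hnm a s (by exact_mod_cast hs)
      refine ⟨⟨c0, (groupCohomology.mem_cocycles₁_iff (A := Rep.of ρ) c0).2 hc0coc⟩, ?_⟩
      rw [hΘapp]
      have hΨc0 : Ψm c0 = v := funext fun O => by
        simp only [hΨm]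
        rw [hc0psi O, hacast O]
      rw [show vv ⟨c0, (groupCohomology.mem_cocycles₁_iff (A := Rep.of ρ) c0).2 hc0coc⟩
          = c0 from rfl, hΨc0, hvy]
    exact ⟨(groupCohomology.H1Iso (Rep.of ρ)).toLinearEquiv.toAddEquiv.trans
      ((Submodule.Quotient.restrictScalarsEquiv ℤ _).symm.toAddEquiv.trans
      ((Submodule.quotEquivOfEq _ _ hBker).trans
      (Θ.quotKerEquivOfSurjective hsurj)).toAddEquiv)⟩
  -- dimension bookkeeping
  have hV : Module.finrank (ZMod 2) (MulAction.orbitRel.Quotient G I → ZMod 2) = r' := by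
    rw [Module.finrank_fintype_fun_eq_card, ← Nat.card_eq_fintype_card, hr']
  have hq := Submodule.finrank_quotient_add_finrank ((ZMod 2) ∙ (⟨u, huS⟩ : LinearMap.ker ℓ))
  have hnbar_eq : ∀ O, nbar O = ((Nat.card (MulAction.orbit G (out O)) : ℕ) : ZMod 2) := by
    intro O
    show ((H1EvenAux.fib G I O).card : ZMod 2) = _
    conv_lhs => rw [show O = Quotient.mk'' (out O) from (hout O).symm]
    rw [H1EvenAux.fib_card]
  constructor
  · intro hall
    have hL0 : ∀ O, nbar O = 0 := fun O => by
      rw [hnbar_eq O]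
      exact hcast_even _ (hall (out O))
    have hker_top : LinearMap.ker ℓ = ⊤ := by
      ext f
      simp only [LinearMap.mem_ker, Submodule.mem_top, iff_true, hlapp]
      rw [Finset.sum_congr rfl fun O _ => by rw [hL0 O, zero_mul]]
      simp
    have hfS : Module.finrank (ZMod 2) ↥(LinearMap.ker ℓ) = r' := by
      rw [hker_top, finrank_top]
      exact hV
    by_cases hΩ : Nonempty (MulAction.orbitRel.Quotient G I)
    · have hune : (⟨u, huS⟩ : LinearMap.ker ℓ) ≠ 0 := by
        intro h0
        obtain ⟨O⟩ := hΩ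
        have h1 : u O = 0 := congrArg
          (fun z : ↥(LinearMap.ker ℓ) => (z : MulAction.orbitRel.Quotient G I → ZMod 2) O) h0
        simp [hu_def] at h1
      have hspan : Module.finrank (ZMod 2)
          ↥((ZMod 2) ∙ (⟨u, huS⟩ : LinearMap.ker ℓ)) = 1 := finrank_span_singleton hune
      exact key (r' - 1) (by omega)
    · have : IsEmpty (MulAction.orbitRel.Quotient G I) := not_nonempty_iff.1 hΩ
      have hr0 : r' = 0 := by rw [← hr', Nat.card_of_isEmpty]
      have hspan_le := Submodule.finrank_le ((ZMod 2) ∙ (⟨u, huS⟩ : LinearMap.ker ℓ))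
      exact key (r' - 1) (by omega)
  · rintro ⟨i₀, hodd⟩
    set O₀ : MulAction.orbitRel.Quotient G I := Quotient.mk'' i₀ with hO₀
    have hnb1 : nbar O₀ = 1 := by
      show ((H1EvenAux.fib G I O₀).card : ZMod 2) = 1
      rw [hO₀, H1EvenAux.fib_card]
      exact hcast_odd _ hodd
    have hlsurj : Function.Surjective ℓ := by
      intro t
      refine ⟨fun O => if O = O₀ then t else 0, ?_⟩
      rw [hlapp]
      rw [Finset.sum_congr rfl fun O _ => by
        rw [show nbar O * (if O = O₀ then t else 0) = if O = O₀ then nbar O * t else 0 from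
          by split <;> simp]]
      rw [Finset.sum_ite_eq' Finset.univ O₀ (fun O => nbar O * t)]
      simp [hnb1]
    have hrk := LinearMap.finrank_range_add_finrank_ker ℓ
    have hrange : LinearMap.range ℓ = ⊤ := LinearMap.range_eq_top.2 hlsurj
    rw [hrange] at hrk
    rw [finrank_top, Module.finrank_self] at hrk
    have hune : (⟨u, huS⟩ : LinearMap.ker ℓ) ≠ 0 := by
      intro h0
      have h1 : u O₀ = 0 := congrArg
        (fun z : ↥(LinearMap.ker ℓ) => (z : MulAction.orbitRel.Quotient G I → ZMod 2) O₀) h0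
      simp [hu_def] at h1
    have hspan : Module.finrank (ZMod 2)
        ↥((ZMod 2) ∙ (⟨u, huS⟩ : LinearMap.ker ℓ)) = 1 := finrank_span_singleton hune
    rw [hV] at hrk
    exact key (r' - 2) (by omega)
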